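/- Let U be an open subset of ℝ^d, f : ℝ^d → ℝ^m, and n ≥ 1 a natural number. Define the canonical slope F₀ : ℝ^d × ℝ^d × ℝ → ℝ^m by F₀(x,v,t) := t⁻¹ • (f(x + t•v) − f(x)) if t ≠ 0 and F₀(x,v,0) := fderiv ℝ f x v. Then f is of class Cⁿ on U (ContDiffOn ℝ n f U) if and only if f is of class C¹ on U and F₀ is of class C^{n−1} on the open set U^[1] := {(x,v,t) : x ∈ U, x + t•v ∈ U} (ContDiffOn ℝ (n−1) F₀ U^[1]). -/

import Mathlib

open MeasureTheory Metric Set Filter Topology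

set_option synthInstance.maxHeartbeats 1000000 in
set_option maxHeartbeats 1000000 in
theorem par_int (k : ℕ) {E : Type} [NormedAddCommGroup E] [NormedSpace ℝ E]
    [FiniteDimensional ℝ E] :
    ∀ {F : Type} [NormedAddCommGroup F] [NormedSpace ℝ F] [CompleteSpace F]
      (K : E × ℝ → F), ContDiff ℝ k K →
      ContDiff ℝ k (fun q => ∫ σ in (0:ℝ)..1, K (q, σ)) := by
  induction k with
  | zero =>
    intro F _ _ _ K hK
    simp only [Nat.cast_zero, contDiff_zero] at *
    exact intervalIntegral.continuous_parametric_intervalIntegral_of_continuous'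
      (f := fun q σ => K (q, σ)) hK 0 1
  | succ k ih =>
    intro F _ _ _ K hK
    set K' : E × ℝ → (E →L[ℝ] F) :=
      fun p => (fderiv ℝ K p).comp (ContinuousLinearMap.inl ℝ E ℝ) with hK'def
    have hK' : ContDiff ℝ k K' :=
      (hK.fderiv_right (by exact_mod_cast le_refl (k+1))).clm_comp contDiff_const
    have hG' : ∀ q₀ : E, HasFDerivAt (fun q => ∫ σ in (0:ℝ)..1, K (q, σ))
        (∫ σ in (0:ℝ)..1, K' (q₀, σ)) q₀ := by
      intro q₀
      obtain ⟨C, hC⟩ : ∃ C, ∀ p ∈ (closedBall q₀ 1) ×ˢ (Icc (0:ℝ) 1), ‖K' p‖ ≤ C :=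
        ((isCompact_closedBall q₀ 1).prod isCompact_Icc).exists_bound_of_continuousOn
          hK'.continuous.continuousOn
      have hKd : Differentiable ℝ K := hK.differentiable
        (by simp)
      apply intervalIntegral.hasFDerivAt_integral_of_dominated_of_fderiv_le
        (F' := fun q σ => K' (q, σ)) (bound := fun _ => C) (s := ball q₀ 1) (ball_mem_nhds q₀ one_pos)
      · exact Filter.Eventually.of_forall fun x =>
          (hK.continuous.comp (Continuous.prodMk_right x)).aestronglyMeasurable
      · exact (hK.continuous.comp (Continuous.prodMk_right q₀)).intervalIntegrable 0 1
      · exact (hK'.continuous.comp (Continuous.prodMk_right q₀)).aestronglyMeasurable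
      · refine Filter.Eventually.of_forall fun σ hσ x hx => hC (x, σ) ?_
        refine ⟨ball_subset_closedBall hx, ?_⟩
        rw [uIoc_of_le (by norm_num : (0:ℝ) ≤ 1)] at hσ
        exact Ioc_subset_Icc_self hσ
      · exact intervalIntegrable_const
      · refine Filter.Eventually.of_forall fun σ _ x _ => ?_
        exact ((hKd (x, σ)).hasFDerivAt).comp x (hasFDerivAt_prodMk_left x σ)
    have hfd : fderiv ℝ (fun q => ∫ σ in (0:ℝ)..1, K (q, σ))
        = fun q => ∫ σ in (0:ℝ)..1, K' (q, σ) := funext fun q => (hG' q).fderiv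
    rw [show ((k+1 : ℕ) : WithTop ℕ∞) = (k : WithTop ℕ∞) + 1 by push_cast; rfl,
      contDiff_succ_iff_fderiv]
    refine ⟨fun q => (hG' q).differentiableAt, by simp, ?_⟩
    rw [hfd]
    exact ih _ hK'



set_option maxHeartbeats 2000000 in
set_option synthInstance.maxHeartbeats 1000000 in
/-- `f : ℝ^d → ℝ^m` is `Cⁿ` on an open set `U` (for `n ≥ 1`) iff `f` is `C¹` on
`U` and its canonical slope `F₀` is `C^{n−1}` on the first extended domain
`U^[1]`. Here `F₀(x,v,t) = t⁻¹ • (f(x+t•v) − f(x))` for `t ≠ 0` and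
`F₀(x,v,0) = df(x)v`. -/
theorem Cn_iff_slope_Cn_minus_one {d m : ℕ}
    (U : Set (EuclideanSpace ℝ (Fin d))) (hU : IsOpen U)
    (f : EuclideanSpace ℝ (Fin d) → EuclideanSpace ℝ (Fin m))
    (n : ℕ) (hn : 1 ≤ n)
    (F0 : EuclideanSpace ℝ (Fin d) × EuclideanSpace ℝ (Fin d) × ℝ →
      EuclideanSpace ℝ (Fin m))
    (hF0 : ∀ p, p.2.2 ≠ 0 →
      F0 p = (p.2.2)⁻¹ • (f (p.1 + p.2.2 • p.2.1) - f p.1))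
    (hF0' : ∀ x v, F0 (x, v, 0) = fderiv ℝ f x v) :
    ContDiffOn ℝ n f U ↔
      (ContDiffOn ℝ 1 f U ∧
        ContDiffOn ℝ (n - 1 : ℕ) F0
          {p | p.1 ∈ U ∧ p.1 + p.2.2 • p.2.1 ∈ U}) := by
  have h1n : (1 : WithTop ℕ∞) ≤ (n : WithTop ℕ∞) := by exact_mod_cast hn
  have hcast : ((n - 1 : ℕ) : WithTop ℕ∞) + 1 = (n : WithTop ℕ∞) := by
    rw [show ((1 : WithTop ℕ∞)) = ((1:ℕ) : WithTop ℕ∞) by norm_cast, ← Nat.cast_add]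
    exact_mod_cast congrArg (Nat.cast : ℕ → WithTop ℕ∞) (Nat.succ_pred_eq_of_pos hn)
  have hle : ((n - 1 : ℕ) : WithTop ℕ∞) ≤ (n : WithTop ℕ∞) :=
    Nat.cast_le.2 (Nat.sub_le n 1)
  constructor
  · intro h
    have h1 : ContDiffOn ℝ 1 f U := h.of_le h1n
    refine ⟨h1, ?_⟩
    intro p hp
    suffices hs : ContDiffAt ℝ (n - 1 : ℕ) F0 p from hs.contDiffWithinAt
    by_cases ht : p.2.2 = 0
    · -- t = 0 case
      obtain ⟨x, v, t⟩ := p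
      simp only at ht
      subst ht
      have hx : x ∈ U := hp.1
      obtain ⟨ε, hε, hball⟩ : ∃ ε > 0, closedBall x ε ⊆ U :=
        (Metric.nhds_basis_closedBall.mem_iff).1 (hU.mem_nhds hx)
      set c : ContDiffBump x := ⟨ε/2, ε, by positivity, by linarith⟩ with hc
      set g : EuclideanSpace ℝ (Fin d) → EuclideanSpace ℝ (Fin m) := fun y => c y • f y with hgdef
      have hgf : ∀ y ∈ closedBall x (ε/2), g y = f y := fun y hy => by
        simp [hgdef, c.one_of_mem_closedBall hy]
      have hg : ContDiff ℝ n g := by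
        rw [contDiff_iff_contDiffAt]
        intro y
        by_cases hy : y ∈ U
        · exact (c.contDiff.contDiffAt).smul (h.contDiffAt (hU.mem_nhds hy))
        · have hy' : y ∈ (tsupport (c : EuclideanSpace ℝ (Fin d) → ℝ))ᶜ := by
            intro hcy
            rw [c.tsupport_eq] at hcy
            exact hy (hball hcy)
          have hev : g =ᶠ[𝓝 y] (fun _ => (0 : EuclideanSpace ℝ (Fin m))) := by
            filter_upwards [(isClosed_tsupport _).isOpen_compl.mem_nhds hy'] with z hz
            simp [hgdef, image_eq_zero_of_notMem_tsupport hz]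
          exact (contDiffAt_const (c := (0:EuclideanSpace ℝ (Fin m)))).congr_of_eventuallyEq hev
      have hg' : ContDiff ℝ (n - 1 : ℕ) (fderiv ℝ g) := hg.fderiv_right (le_of_eq hcast)
      set K : (EuclideanSpace ℝ (Fin d) × EuclideanSpace ℝ (Fin d) × ℝ) × ℝ → EuclideanSpace ℝ (Fin m) :=
        fun qσ => fderiv ℝ g (qσ.1.1 + (qσ.2 * qσ.1.2.2) • qσ.1.2.1) qσ.1.2.1 with hKdef
      have hK : ContDiff ℝ (n - 1 : ℕ) K := by
        refine ContDiff.clm_apply ?_ (contDiff_fst.snd.fst)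
        exact hg'.comp (contDiff_fst.fst.add
          ((contDiff_snd.mul contDiff_fst.snd.snd).smul contDiff_fst.snd.fst))
      have hGsmooth : ContDiff ℝ (n - 1 : ℕ) (fun q => ∫ σ in (0:ℝ)..1, K (q, σ)) :=
        par_int _ _ hK
      set δ : ℝ := ε / (8 * (‖v‖ + 1)) with hδ
      have hvpos : 0 < ‖v‖ + 1 := by positivity
      have hδpos : 0 < δ := by positivity
      set W : Set (EuclideanSpace ℝ (Fin d) × EuclideanSpace ℝ (Fin d) × ℝ) :=
        {q | q.1 ∈ ball x (ε/8) ∧ q.2.1 ∈ ball v 1 ∧ |q.2.2| < δ} with hW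
      have hWopen : IsOpen W := by
        rw [hW]
        exact ((isOpen_ball.preimage continuous_fst).and
          ((isOpen_ball.preimage continuous_snd.fst).and
            (isOpen_lt continuous_snd.snd.abs continuous_const)))
      have hpW : ((x, v, 0) : EuclideanSpace ℝ (Fin d) × EuclideanSpace ℝ (Fin d) × ℝ) ∈ W := by
        simp only [hW, mem_setOf_eq]
        exact ⟨mem_ball_self (by positivity), mem_ball_self one_pos, by simpa using hδpos⟩
      have hseg : ∀ q ∈ W, ∀ σ ∈ Icc (0:ℝ) 1,
          q.1 + (σ * q.2.2) • q.2.1 ∈ closedBall x (ε/2) := by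
        rintro ⟨y, w, s⟩ ⟨hy, hw, hs⟩ σ hσ
        have hwn : ‖w‖ < ‖v‖ + 1 := by
          calc ‖w‖ ≤ ‖v‖ + ‖w - v‖ := by
                have := norm_add_le (w - v) v; simpa [add_comm] using this
            _ < ‖v‖ + 1 := by
                have : ‖w - v‖ < 1 := by simpa [dist_eq_norm] using hw
                linarith
        have hsmul : ‖(σ * s) • w‖ ≤ ε/8 := by
          rw [norm_smul]
          have h1 : |σ * s| ≤ |s| := by
            rw [abs_mul]
            have : |σ| ≤ 1 := by rw [abs_of_nonneg hσ.1]; exact hσ.2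
            nlinarith [abs_nonneg s]
          have h2 : |s| * ‖w‖ ≤ δ * (‖v‖ + 1) := by
            apply mul_le_mul (le_of_lt hs) (le_of_lt hwn) (norm_nonneg w) (le_of_lt hδpos)
          have h3 : δ * (‖v‖ + 1) = ε / 8 := by
            rw [hδ]; field_simp
          calc |σ * s| * ‖w‖ ≤ |s| * ‖w‖ :=
                mul_le_mul_of_nonneg_right h1 (norm_nonneg w)
            _ ≤ ε/8 := h3 ▸ h2
        have hyx : ‖y - x‖ < ε/8 := by simpa [dist_eq_norm] using hy
        rw [mem_closedBall, dist_eq_norm]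
        calc ‖y + (σ * s) • w - x‖ = ‖(y - x) + (σ * s) • w‖ := by rw [add_sub_right_comm]
          _ ≤ ‖y - x‖ + ‖(σ * s) • w‖ := norm_add_le _ _
          _ ≤ ε/8 + ε/8 := by linarith
          _ ≤ ε/2 := by linarith
      have key : ∀ q ∈ W, F0 q = ∫ σ in (0:ℝ)..1, K (q, σ) := by
        rintro ⟨y, w, s⟩ hqW
        have hyU : y ∈ closedBall x (ε/2) := by
          have := hseg _ hqW 0 ⟨le_refl 0, zero_le_one⟩
          simpa using this
        by_cases hs : s = 0
        · subst hs
          have hfg : fderiv ℝ f y = fderiv ℝ g y := by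
            have hev : f =ᶠ[𝓝 y] g := by
              have hy8 : y ∈ ball x (ε/2) := by
                have := hqW.1
                exact ball_subset_ball (by linarith) this
              filter_upwards [isOpen_ball.mem_nhds hy8] with z hz
              exact (hgf z (ball_subset_closedBall hz)).symm
            exact hev.fderiv_eq
          rw [hF0' y w]
          simp only [hKdef, mul_zero, zero_smul, add_zero]
          rw [intervalIntegral.integral_const]
          simp [hfg]
        · rw [hF0 (y, w, s) hs]
          simp only
          have hderiv : ∀ σ ∈ uIcc (0:ℝ) 1, HasDerivAt (fun σ => g (y + (σ * s) • w))
              (fderiv ℝ g (y + (σ * s) • w) (s • w)) σ := by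
            intro σ _
            have h1 : HasDerivAt (fun σ : ℝ => y + (σ * s) • w) (s • w) σ := by
              simpa [mul_smul] using (((hasDerivAt_id σ).smul_const (s • w)).const_add y)
            exact ((hg.differentiable (by exact_mod_cast (by omega : n ≠ 0)) _).hasFDerivAt).comp_hasDerivAt σ h1
          have hint : IntervalIntegrable
              (fun σ => fderiv ℝ g (y + (σ * s) • w) (s • w)) volume 0 1 := by
            apply Continuous.intervalIntegrable
            have : Continuous (fderiv ℝ g) := (hg.fderiv_right (le_of_eq hcast)).continuous
            exact ((this.comp (by continuity)).clm_apply continuous_const)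
          have heq : g (y + (1 * s) • w) - g (y + (0 * s) • w)
              = ∫ σ in (0:ℝ)..1, fderiv ℝ g (y + (σ * s) • w) (s • w) := by
            rw [← intervalIntegral.integral_eq_sub_of_hasDerivAt hderiv hint]
          have hgy : g y = f y := hgf y hyU
          have hgy' : g (y + s • w) = f (y + s • w) := by
            apply hgf
            have := hseg _ hqW 1 ⟨zero_le_one, le_refl 1⟩
            simpa using this
          have hsint : ∫ σ in (0:ℝ)..1, fderiv ℝ g (y + (σ * s) • w) (s • w)
              = s • ∫ σ in (0:ℝ)..1, K ((y, w, s), σ) := by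
            rw [← intervalIntegral.integral_smul]
            congr 1
            ext σ
            simp [hKdef, mul_smul, ContinuousLinearMap.map_smul]
          rw [show f (y + s • w) - f y = g (y + (1 * s) • w) - g (y + (0 * s) • w) by
            simp only [one_mul, zero_mul, zero_smul, add_zero, hgy, hgy']]
          rw [heq, hsint, smul_smul, inv_mul_cancel₀ hs, one_smul]
      refine ContDiffAt.congr_of_eventuallyEq hGsmooth.contDiffAt ?_
      filter_upwards [hWopen.mem_nhds hpW] with q hq using key q hq
    · -- t ≠ 0 case
      have hx : p.1 ∈ U := hp.1
      have hy : p.1 + p.2.2 • p.2.1 ∈ U := hp.2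
      have hf1 : ContDiffAt ℝ (n - 1 : ℕ) f p.1 :=
        (h.contDiffAt (hU.mem_nhds hx)).of_le hle
      have hf2 : ContDiffAt ℝ (n - 1 : ℕ) f (p.1 + p.2.2 • p.2.1) :=
        (h.contDiffAt (hU.mem_nhds hy)).of_le hle
      have hinner : ContDiff ℝ (n - 1 : ℕ) (fun q : EuclideanSpace ℝ (Fin d) × EuclideanSpace ℝ (Fin d) × ℝ => q.1 + q.2.2 • q.2.1) :=
        contDiff_fst.add (contDiff_snd.snd.smul contDiff_snd.fst)
      have hinv : ContDiffAt ℝ (n - 1 : ℕ) (fun q : EuclideanSpace ℝ (Fin d) × EuclideanSpace ℝ (Fin d) × ℝ => (q.2.2)⁻¹) p :=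
        (contDiffAt_inv ℝ ht).comp p contDiff_snd.snd.contDiffAt
      have hphi : ContDiffAt ℝ (n - 1 : ℕ)
          (fun q : EuclideanSpace ℝ (Fin d) × EuclideanSpace ℝ (Fin d) × ℝ => (q.2.2)⁻¹ • (f (q.1 + q.2.2 • q.2.1) - f q.1)) p :=
        hinv.smul ((hf2.comp p hinner.contDiffAt).sub (hf1.comp p contDiff_fst.contDiffAt))
      refine ContDiffAt.congr_of_eventuallyEq hphi ?_
      have hmem : {q : EuclideanSpace ℝ (Fin d) × EuclideanSpace ℝ (Fin d) × ℝ | q.2.2 ≠ 0} ∈ 𝓝 p :=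
        (isOpen_ne.preimage (continuous_snd.snd)).mem_nhds ht
      filter_upwards [hmem] with q hq using hF0 q hq
  · rintro ⟨h1, hF⟩
    rw [← hcast, contDiffOn_succ_iff_fderiv_of_isOpen hU]
    refine ⟨h1.differentiableOn one_ne_zero, by simp, ?_⟩
    refine contDiffOn_clm_apply.2 fun v => ?_
    have hmap : ContDiffOn ℝ (n - 1 : ℕ) (fun x => F0 (x, v, 0)) U := by
      refine hF.comp ((contDiff_id.prodMk (contDiff_const (c := (v, (0:ℝ))))).contDiffOn) ?_
      intro x hx
      exact ⟨hx, by simpa using hx⟩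
    exact hmap.congr fun x hx => (hF0' x v).symm
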